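/- For any nonnegative w ∈ ℝ^n with ‖w‖₁ = 1 and n ≥ 2, the Laakso–Taagepera index L(w) = 1/(Σᵢ w_i²) satisfies L(w) ≤ 1/(Δ² + (1−Δ)²/(n−1)), where Δ = maxᵢ w_i. -/
import Mathlib


theorem stmt6 (n : ℕ) (hn : 2 ≤ n) (w : Fin n → ℝ)
    (hw : ∀ i, 0 ≤ w i) (h1 : ∑ i, w i = 1)
    (Δ : ℝ) (hΔ : Δ = Finset.univ.sup' ⟨⟨0, by omega⟩, Finset.mem_univ _⟩ w) :
    1 / ∑ i, (w i) ^ 2 ≤ 1 / (Δ ^ 2 + (1 - Δ) ^ 2 / ((n : ℝ) - 1)) := by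
  obtain ⟨j, -, hj⟩ := Finset.exists_mem_eq_sup' (⟨⟨0, by omega⟩, Finset.mem_univ _⟩ :
    (Finset.univ : Finset (Fin n)).Nonempty) w
  have hΔj : Δ = w j := hΔ.trans hj
  have hΔmax : ∀ i, w i ≤ Δ := by
    intro i
    rw [hΔ]
    exact Finset.le_sup' w (Finset.mem_univ i)
  have hn1 : (0 : ℝ) < (n : ℝ) - 1 := by
    have : (2 : ℝ) ≤ n := by exact_mod_cast hn
    linarith
  have hΔpos : 0 < Δ := by
    by_contra h
    push_neg at h
    have : ∀ i, w i = 0 := fun i => le_antisymm (le_trans (hΔmax i) h) (hw i)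
    rw [Finset.sum_congr rfl (fun i _ => this i)] at h1
    simp at h1
  -- key inequality
  have hsum_erase : ∑ i ∈ Finset.univ.erase j, w i = 1 - Δ := by
    have := Finset.add_sum_erase Finset.univ w (Finset.mem_univ j)
    rw [h1] at this
    rw [hΔj]; linarith
  have hcard : ((Finset.univ.erase j).card : ℝ) = (n : ℝ) - 1 := by
    rw [Finset.card_erase_of_mem (Finset.mem_univ j)]
    simp
    have : 1 ≤ n := by omega
    push_cast [Nat.cast_sub this]
    ring
  have hcs : (1 - Δ) ^ 2 ≤ ((n : ℝ) - 1) * ∑ i ∈ Finset.univ.erase j, w i ^ 2 := by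
    have := sq_sum_le_card_mul_sum_sq (s := Finset.univ.erase j) (f := w)
    rwa [hsum_erase, hcard] at this
  have hkey : Δ ^ 2 + (1 - Δ) ^ 2 / ((n : ℝ) - 1) ≤ ∑ i, (w i) ^ 2 := by
    have hsplit : ∑ i, (w i) ^ 2
        = w j ^ 2 + ∑ i ∈ Finset.univ.erase j, w i ^ 2 :=
      (Finset.add_sum_erase Finset.univ (fun i => w i ^ 2) (Finset.mem_univ j)).symm
    rw [hsplit, ← hΔj]
    have : (1 - Δ) ^ 2 / ((n : ℝ) - 1) ≤ ∑ i ∈ Finset.univ.erase j, w i ^ 2 :=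
      (div_le_iff₀ hn1).2 (by linarith [hcs])
    linarith
  have hden : 0 < Δ ^ 2 + (1 - Δ) ^ 2 / ((n : ℝ) - 1) := by positivity
  exact one_div_le_one_div_of_le hden hkey
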